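/- For the vector fields V_{2k} = z(z²-α²)^k d/dz and V_{2k+1} = (z²-α²)^{k+1} d/dz on ℂ \ {±α}, the Lie bracket of vector fields satisfies: [V_n, V_m] = (m-n)V_{n+m} if n,m both odd; [V_n, V_m] = (m-n)V_{n+m} + (m-n-1)α²V_{n+m-2} if n odd, m even; and [V_n, V_m] = (m-n)(V_{n+m} + α²V_{n+m-2}) if n,m both even. -/
import Mathlib


/-- The coefficient functions of the vector fields `V_n`:
`V_{2k} = z(z²-α²)^k d/dz`, `V_{2k+1} = (z²-α²)^{k+1} d/dz`, for `k ∈ ℤ`,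
identified with elements of `ℂ(z)`. -/
noncomputable def Vf (α : ℂ) (n : ℤ) : RatFunc ℂ :=
  if Even n then RatFunc.X * (RatFunc.X ^ 2 - RatFunc.C (α ^ 2)) ^ (n / 2)
  else (RatFunc.X ^ 2 - RatFunc.C (α ^ 2)) ^ ((n + 1) / 2)

noncomputable def ww (α : ℂ) : RatFunc ℂ := RatFunc.X ^ 2 - RatFunc.C (α ^ 2)

lemma ww_def (α : ℂ) : ww α = RatFunc.X ^ 2 - RatFunc.C (α ^ 2) := rfl

lemma ww_ne (α : ℂ) : ww α ≠ 0 := by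
  have h : (Polynomial.X ^ 2 - Polynomial.C (α ^ 2) : Polynomial ℂ) ≠ 0 :=
    Polynomial.X_pow_sub_C_ne_zero (by norm_num) _
  have h2 : ww α = algebraMap (Polynomial ℂ) (RatFunc ℂ)
      (Polynomial.X ^ 2 - Polynomial.C (α ^ 2)) := by
    simp [ww, RatFunc.algebraMap_C]
  rw [h2]
  exact RatFunc.algebraMap_ne_zero h

lemma zsplit (α : ℂ) (i j k : ℤ) (h : i = j + k) :
    ww α ^ i = ww α ^ j * ww α ^ k := by rw [h, zpow_add₀ (ww_ne α)]

lemma csmul (c : ℂ) (x : RatFunc ℂ) : c • x = RatFunc.C c * x := by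
  rw [Algebra.smul_def, RatFunc.algebraMap_eq_C]

lemma d_ww (α : ℂ) (d : Derivation ℂ (RatFunc ℂ) (RatFunc ℂ)) (hd : d RatFunc.X = 1) :
    d (ww α) = 2 * RatFunc.X := by
  have h : (RatFunc.C (α ^ 2) : RatFunc ℂ) = algebraMap ℂ (RatFunc ℂ) (α ^ 2) := by
    rw [RatFunc.algebraMap_eq_C]
  simp [ww, h, hd]

lemma d_ww_zpow (α : ℂ) (d : Derivation ℂ (RatFunc ℂ) (RatFunc ℂ)) (hd : d RatFunc.X = 1)
    (k : ℤ) : d (ww α ^ k) = RatFunc.C (2 * (k : ℂ)) * (RatFunc.X * ww α ^ (k - 1)) := by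
  rw [Derivation.leibniz_zpow, d_ww α d hd, zsmul_eq_mul, smul_eq_mul, map_mul,
    map_intCast, map_ofNat]
  ring

lemma Vf_odd (α : ℂ) {n : ℤ} (h : Odd n) : Vf α n = ww α ^ ((n + 1) / 2) := by
  rw [Vf, if_neg (by simpa using h)]; rfl

lemma Vf_even (α : ℂ) {n : ℤ} (h : Even n) : Vf α n = RatFunc.X * ww α ^ (n / 2) := by
  rw [Vf, if_pos h]; rfl

/-- the Lie bracket `[f d/dz, g d/dz] = (fg' - f'g) d/dz` of the vector
fields `V_n` satisfies the stated relations.  Here `d` is the derivation of `ℂ(z)`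
with `d(z) = 1`, i.e. differentiation of rational functions. -/
theorem stmt_9 (α : ℂ) (hα : α ≠ 0)
    (d : Derivation ℂ (RatFunc ℂ) (RatFunc ℂ)) (hd : d RatFunc.X = 1)
    (n m : ℤ) :
    (Odd n → Odd m →
      Vf α n * d (Vf α m) - d (Vf α n) * Vf α m = ((m : ℂ) - (n : ℂ)) • Vf α (n + m)) ∧
    (Odd n → Even m →
      Vf α n * d (Vf α m) - d (Vf α n) * Vf α m =
        ((m : ℂ) - (n : ℂ)) • Vf α (n + m)
          + (((m : ℂ) - (n : ℂ) - 1) * α ^ 2) • Vf α (n + m - 2)) ∧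
    (Even n → Even m →
      Vf α n * d (Vf α m) - d (Vf α n) * Vf α m =
        ((m : ℂ) - (n : ℂ)) • (Vf α (n + m) + (α ^ 2) • Vf α (n + m - 2))) := by
  refine ⟨?_, ?_, ?_⟩
  · rintro ⟨a, rfl⟩ ⟨b, rfl⟩
    rw [Vf_odd α ⟨a, rfl⟩, Vf_odd α ⟨b, rfl⟩, Vf_even α ⟨a + b + 1, by ring⟩,
      show (2*a+1+1)/2 = a+1 by omega, show (2*b+1+1)/2 = b+1 by omega,
      show (2*a+1+(2*b+1))/2 = a+b+1 by omega,
      d_ww_zpow α d hd, d_ww_zpow α d hd, csmul,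
      show (a:ℤ)+1-1 = a by ring, show (b:ℤ)+1-1 = b by ring]
    have hP : RatFunc.C (((2*b+1 : ℤ) : ℂ) - ((2*a+1 : ℤ) : ℂ)) =
        RatFunc.C (2 * ((b+1 : ℤ) : ℂ)) - RatFunc.C (2 * ((a+1 : ℤ) : ℂ)) := by
      rw [← map_sub]
      congr 1
      push_cast; ring
    rw [hP, zsplit α (a+1) a 1 (by ring), zsplit α (b+1) b 1 (by ring),
      zsplit α (a+b+1) a (b+1) (by ring), zsplit α (b+1) b 1 (by ring), zpow_one]
    ring
  · rintro ⟨a, rfl⟩ ⟨b, rfl⟩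
    rw [Vf_odd α ⟨a, rfl⟩, Vf_even α ⟨b, rfl⟩, Vf_odd α ⟨a + b, by ring⟩,
      Vf_odd α (n := 2*a+1+(b+b)-2) ⟨a + b - 1, by ring⟩,
      show (2*a+1+1)/2 = a+1 by omega, show (b+b)/2 = b by omega,
      show (2*a+1+(b+b)+1)/2 = a+b+1 by omega,
      show (2*a+1+(b+b)-2+1)/2 = a+b by omega,
      Derivation.leibniz, hd, d_ww_zpow α d hd, d_ww_zpow α d hd, csmul, csmul,
      show (a:ℤ)+1-1 = a by ring]
    have hP : RatFunc.C (((b+b : ℤ) : ℂ) - ((2*a+1 : ℤ) : ℂ)) =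
        RatFunc.C (2 * ((b : ℤ) : ℂ)) - RatFunc.C (2 * ((a+1 : ℤ) : ℂ)) + 1 := by
      rw [show (((b+b : ℤ) : ℂ) - ((2*a+1 : ℤ) : ℂ))
          = (2 * ((b : ℤ) : ℂ)) - (2 * ((a+1 : ℤ) : ℂ)) + 1 by push_cast; ring,
        map_add, map_sub, map_one]
    have hQ : RatFunc.C ((((b+b : ℤ) : ℂ) - ((2*a+1 : ℤ) : ℂ) - 1) * α ^ 2) =
        (RatFunc.C (2 * ((b : ℤ) : ℂ)) - RatFunc.C (2 * ((a+1 : ℤ) : ℂ)))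
          * RatFunc.C (α ^ 2) := by
      rw [show ((((b+b : ℤ) : ℂ) - ((2*a+1 : ℤ) : ℂ) - 1) * α ^ 2)
          = ((2 * ((b : ℤ) : ℂ)) - (2 * ((a+1 : ℤ) : ℂ))) * (α^2) by push_cast; ring,
        map_mul, map_sub]
    rw [hP, hQ,
      zsplit α (a+1) a 1 (by ring),
      zsplit α (a+b+1) (a+b) 1 (by ring),
      zsplit α (a+b) a (b-1+1) (by ring), zsplit α (b-1+1) (b-1) 1 (by ring),
      zsplit α b (b-1) 1 (by ring), zpow_one, smul_eq_mul, smul_eq_mul, ww_def]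
    ring
  · rintro ⟨a, rfl⟩ ⟨b, rfl⟩
    rw [Vf_even α ⟨a, rfl⟩, Vf_even α ⟨b, rfl⟩, Vf_even α ⟨a + b, by ring⟩,
      Vf_even α (n := a+a+(b+b)-2) ⟨a + b - 1, by ring⟩,
      show (a+a)/2 = a by omega, show (b+b)/2 = b by omega,
      show (a+a+(b+b))/2 = a+b by omega,
      show (a+a+(b+b)-2)/2 = a+b-1 by omega,
      Derivation.leibniz, Derivation.leibniz, hd, d_ww_zpow α d hd, d_ww_zpow α d hd,
      csmul, csmul]
    have hP : RatFunc.C (((b+b : ℤ) : ℂ) - ((a+a : ℤ) : ℂ)) =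
        RatFunc.C (2 * ((b : ℤ) : ℂ)) - RatFunc.C (2 * ((a : ℤ) : ℂ)) := by
      rw [← map_sub]; congr 1; push_cast; ring
    rw [hP,
      zsplit α (a+b) (a+b-1) 1 (by ring),
      zsplit α (a+b-1) (a-1) (b-1+1) (by ring), zsplit α (b-1+1) (b-1) 1 (by ring),
      zsplit α a (a-1) 1 (by ring), zsplit α b (b-1) 1 (by ring), zpow_one,
      smul_eq_mul, smul_eq_mul, smul_eq_mul, smul_eq_mul, ww_def]
    ring
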